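/- Let M have the property 𝕄. If δ : A → M is linear and δ(A)∘B − A∘δ(B) = 0 whenever A∘B = 0 (where A∘B = AB + BA), then δ(A) = ½(Aδ(I) + δ(I)A) for every A ∈ A. -/
import Mathlib


open MulOpposite

/-- Let `M` have property `𝕄`. If `δ(A)∘B − A∘δ(B) = 0` whenever `A∘B = 0`,
then `δ(A) = ½(A δ(I) + δ(I) A)` for every `A`. -/
theorem stmt16 {A : Type*} {M : Type*}
    [Ring A] [Algebra ℂ A]
    [AddCommGroup M] [Module ℂ M] [Module A M] [Module Aᵐᵒᵖ M]
    [SMulCommClass A Aᵐᵒᵖ M] [IsScalarTower ℂ A M] [IsScalarTower ℂ Aᵐᵒᵖ M]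
    (J : Set A)
    (hJsub : ∀ x ∈ J, x ∈ Algebra.adjoin ℂ {e : A | IsIdempotentElem e})
    (hJadd : ∀ x ∈ J, ∀ y ∈ J, x + y ∈ J)
    (hJl : ∀ (a : A), ∀ x ∈ J, a * x ∈ J)
    (hJr : ∀ (a : A), ∀ x ∈ J, x * a ∈ J)
    (hM : ∀ m : M, (∀ x ∈ J, op x • (x • m) = 0) → m = 0)
    (δ : A →ₗ[ℂ] M)
    (h : ∀ a b : A, a * b + b * a = 0 →
      (op b • δ a + b • δ a) - (a • δ b + op a • δ b) = 0) :
    ∀ a : A, δ a = ((2 : ℂ)⁻¹) • (a • δ 1 + op a • δ 1) := by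
  haveI : SMulCommClass Aᵐᵒᵖ A M := SMulCommClass.symm A Aᵐᵒᵖ M
  have half : ∀ v : M, v + v = 0 → v = 0 := by
    intro v hv
    have h2 : (2:ℂ) • v = 0 := by rw [two_smul]; exact hv
    calc v = ((2:ℂ)⁻¹ * 2) • v := by norm_num
    _ = (2:ℂ)⁻¹ • ((2:ℂ) • v) := by rw [mul_smul]
    _ = 0 := by rw [h2, smul_zero]
  set m := δ 1 with hm
  set E : A → M := fun a => (2:ℂ) • δ a - (a • m + op a • m) with hEdef
  have hEadd : ∀ a b : A, E (a + b) = E a + E b := by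
    intro a b
    simp only [hEdef, map_add, op_add, add_smul, smul_add]
    abel
  have hEsub : ∀ a b : A, E (a - b) = E a - E b := by
    intro a b
    simp only [hEdef, map_sub, op_sub, sub_smul, smul_sub]
    abel
  have hE1 : E 1 = 0 := by
    simp only [hEdef, map_one, op_one, one_smul, two_smul]
    abel
  have hEsmul : ∀ (c : ℂ) (a : A), E (c • a) = c • E a := by
    intro c a
    simp only [hEdef, map_smul, op_smul, smul_assoc, smul_sub, smul_add]
    rw [smul_comm (2:ℂ) c]
  have hEkey : ∀ a b : A, a * b + b * a = 0 →
      (op b • E a + b • E a) - (a • E b + op a • E b)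
        = (op (b*a) • m - (b*a) • m) + (op (b*a) • m - (b*a) • m) := by
    intro a b hab
    have hab' : a * b = -(b * a) := eq_neg_of_add_eq_zero_left hab
    have hk := h a b hab
    have main : (op b • E a + b • E a) - (a • E b + op a • E b)
        = (2:ℂ) • ((op b • δ a + b • δ a) - (a • δ b + op a • δ b))
          + ((op (b*a) • m - (b*a) • m) + (op (b*a) • m - (b*a) • m)) := by
      simp only [hEdef, smul_sub, smul_add]
      rw [smul_comm (op b) (2:ℂ) (δ a), smul_comm b (2:ℂ) (δ a),
        smul_comm a (2:ℂ) (δ b), smul_comm (op a) (2:ℂ) (δ b)]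
      rw [smul_comm (op b) a m, smul_comm (op a) b m]
      simp only [← mul_smul, ← op_mul]
      rw [hab']
      simp only [op_neg, neg_smul]
      abel
    rw [main, hk, smul_zero, zero_add]
  have hidem : ∀ p : A, p * p = p → E p = 0 := by
    intro p hp
    have hba : (1-p) * p = 0 := by simp [sub_mul, hp]
    have hab : p * (1-p) + (1-p) * p = 0 := by simp [mul_sub, sub_mul, hp]
    have hkey := hEkey p (1-p) hab
    rw [hba] at hkey
    simp only [op_zero, zero_smul, sub_zero, add_zero, sub_self] at hkey
    have hE1p : E (1-p) = - E p := by rw [hEsub, hE1, zero_sub]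
    rw [hE1p] at hkey
    simp only [op_sub, op_one, sub_smul, one_smul, smul_neg] at hkey
    apply half
    rw [← hkey]; abel
  have hcorner : ∀ p : A, p * p = p → ∀ x : A, E (p*x*(1-p)) = 0 := by
    intro p hp x
    have h1 : (1-p) * p = 0 := by simp [sub_mul, hp]
    have e2 : (p*x*(1-p)) * p = 0 := by rw [mul_assoc, h1, mul_zero]
    have e3 : p * (p*x*(1-p)) = p*x*(1-p) := by rw [← mul_assoc, ← mul_assoc, hp]
    have e4 : (p*x*(1-p)) * (p*x*(1-p)) = 0 := by
      rw [mul_assoc (p*x) (1-p), ← mul_assoc (1-p) (p*x), ← mul_assoc (1-p) p, h1,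
        zero_mul, zero_mul, mul_zero]
    have he : (p + p*x*(1-p)) * (p + p*x*(1-p)) = p + p*x*(1-p) := by
      rw [add_mul, mul_add, mul_add, hp, e2, e3, e4, add_zero, add_zero]
    have hid := hidem _ he
    rw [hEadd, hidem p hp, zero_add] at hid
    exact hid
  have hdiag : ∀ p : A, p * p = p → ∀ x : A, (1-p) • E (p*x*p) = 0 := by
    intro p hp x
    have hq : (1-p) * (1-p) = 1-p := by
      simp [mul_sub, sub_mul, hp]
    have hA2 : (1-p) * (p*x*p) = 0 := by
      rw [← mul_assoc, ← mul_assoc]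
      simp [sub_mul, hp]
    have hB : (p*x*p) * (1-p) = 0 := by
      rw [mul_assoc]
      have : p * (1-p) = 0 := by simp [mul_sub, hp]
      rw [this, mul_zero]
    have hzero : (1-p) * (p*x*p) + (p*x*p) * (1-p) = 0 := by rw [hA2, hB, add_zero]
    have hkey := hEkey (1-p) (p*x*p) hzero
    rw [hB] at hkey
    rw [hidem _ hq] at hkey
    simp only [op_zero, zero_smul, sub_zero, add_zero, sub_self, smul_zero, zero_add] at hkey
    -- hkey : 0 - ((1-p) • E (p*x*p) + op (1-p) • E (p*x*p)) = 0
    have E0 : (1-p) • E (p*x*p) + op (1-p) • E (p*x*p) = 0 := by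
      have := hkey
      rw [zero_sub, neg_eq_zero] at this
      exact this
    have i1 := congrArg (fun v => (1-p) • v) E0
    have i2 := congrArg (fun v => op (1-p) • v) E0
    simp only [smul_add, smul_zero] at i1 i2
    rw [← mul_smul, hq] at i1
    rw [smul_comm (op (1-p)) (1-p), ← mul_smul (op (1-p)) (op (1-p)), ← op_mul, hq] at i2
    -- i1 : (1-p) • E + (1-p) • (op (1-p) • E) = 0
    -- i2 : (1-p) • (op (1-p) • E) + op (1-p) • E = 0
    apply half
    have key2 : (1-p) • E (p*x*p) + (1-p) • E (p*x*p)
        = ((1-p) • E (p*x*p) + (1-p) • (op (1-p) • E (p*x*p)))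
          + (((1-p) • E (p*x*p) + op (1-p) • E (p*x*p))
            - ((1-p) • (op (1-p) • E (p*x*p)) + op (1-p) • E (p*x*p))) := by abel
    rw [key2, i1, E0, i2]
    simp
  have hgen : ∀ p : A, p * p = p → ∀ a : A, E (p * a) = p • E a := by
    intro p hp a
    have hq : (1-p) * (1-p) = 1-p := by simp [mul_sub, sub_mul, hp]
    have c1 : E (p*a*(1-p)) = 0 := hcorner p hp a
    have c2 : E ((1-p)*a*p) = 0 := by
      have := hcorner (1-p) hq a
      rw [sub_sub_cancel] at this
      exact this
    have d1 : p * a = p*a*p + p*a*(1-p) := by noncomm_ring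
    have d2 : a = (p*a*p + p*a*(1-p)) + ((1-p)*a*p + (1-p)*a*(1-p)) := by noncomm_ring
    have hEpa : E (p*a) = E (p*a*p) := by
      have := hEadd (p*a*p) (p*a*(1-p))
      rw [← d1, c1, add_zero] at this
      exact this
    have hEa : E a = E (p*a*p) + E ((1-p)*a*(1-p)) := by
      have := hEadd (p*a*p + p*a*(1-p)) ((1-p)*a*p + (1-p)*a*(1-p))
      rw [← d2, hEadd (p*a*p) (p*a*(1-p)), hEadd ((1-p)*a*p) ((1-p)*a*(1-p)),
        c1, c2, add_zero, zero_add] at this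
      exact this
    have s1 : (1-p) • E (p*a*p) = 0 := hdiag p hp a
    have s2 : p • E ((1-p)*a*(1-p)) = 0 := by
      have := hdiag (1-p) hq a
      rw [sub_sub_cancel] at this
      exact this
    have s1' : p • E (p*a*p) = E (p*a*p) := by
      rw [sub_smul, one_smul] at s1
      exact (sub_eq_zero.mp s1).symm
    rw [hEpa, hEa, smul_add, s1', s2, add_zero]
  have hADJ : ∀ X : A, X ∈ Algebra.adjoin ℂ {e : A | IsIdempotentElem e} →
      ∀ a : A, E (X * a) = X • E a := by
    intro X hX
    induction hX using Algebra.adjoin_induction with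
    | mem p hpmem => exact hgen p hpmem
    | algebraMap c =>
      intro a
      rw [← Algebra.smul_def, hEsmul, algebraMap_smul]
    | add X Y hX hY ihX ihY =>
      intro a
      rw [add_mul, hEadd, ihX, ihY, add_smul]
    | mul X Y hX hY ihX ihY =>
      intro a
      rw [mul_assoc, ihX, ihY, mul_smul]
  intro a
  have hEa : E a = 0 := by
    apply hM
    intro x hx
    have h2 : E (x * a) = x • E a := hADJ x (hJsub x hx) a
    have h3 : x * a ∈ J := hJr a x hx
    have h4 : E ((x*a) * 1) = (x*a) • E 1 := hADJ (x*a) (hJsub _ h3) 1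
    rw [mul_one, hE1, smul_zero] at h4
    rw [← h2, h4, smul_zero]
  have hfin : (2:ℂ) • δ a = a • m + op a • m := by
    have := hEa
    simp only [hEdef] at this
    exact sub_eq_zero.mp this
  calc δ a = ((2:ℂ)⁻¹ * 2) • δ a := by norm_num
  _ = (2:ℂ)⁻¹ • ((2:ℂ) • δ a) := by rw [mul_smul]
  _ = (2:ℂ)⁻¹ • (a • m + op a • m) := by rw [hfin]
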